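/- On U = {(x,y) ∈ ℝ² : 0 < x < π/2}, the metric g₄ given by the matrix G₄(x,y) = diag(cos⁴x, sin²x) (i.e., g₄ = (cos⁴x)dx² + (sin²x)dy²) has Gauss curvature K = −1/cos⁴x < 0, and the function k := √(−K) = 1/cos²x satisfies the tensor equation (∇²k)_{ij} = (5/(2k)) ∂_i k ∂_j k + 2k³ (g₄)_{ij} on U. -/

import Mathlib

noncomputable section
open Matrix Real

/-- Points of the parameter domain `U ⊆ ℝ²`. -/
abbrev Pt : Type := Fin 2 → ℝ
/-- Vectors in `ℝ³`. -/
abbrev Vec3 : Type := Fin 3 → ℝ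

/-- Partial derivative `∂ᵢ` of a scalar function on `ℝ²`. -/
def pd (i : Fin 2) (f : Pt → ℝ) : Pt → ℝ :=
  fun p => fderiv ℝ f p (Pi.single i 1)

/-- Partial derivative `∂ᵢ` of an `ℝ³`-valued function on `ℝ²`. -/
def pdV (i : Fin 2) (f : Pt → Vec3) : Pt → Vec3 :=
  fun p => fderiv ℝ f p (Pi.single i 1)

/-- The induced metric (first fundamental form) `gᵢⱼ = ∂ᵢφ ⬝ ∂ⱼφ` of a map `φ : ℝ² → ℝ³`. -/
def indMetric (φ : Pt → Vec3) : Pt → Matrix (Fin 2) (Fin 2) ℝ :=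
  fun p => Matrix.of fun i j => pdV i φ p ⬝ᵥ pdV j φ p

/-- The unit normal `n = (∂₁φ × ∂₂φ)/‖∂₁φ × ∂₂φ‖`. -/
def unitNormal (φ : Pt → Vec3) : Pt → Vec3 :=
  fun p => (Real.sqrt ((crossProduct (pdV 0 φ p) (pdV 1 φ p)) ⬝ᵥ
      (crossProduct (pdV 0 φ p) (pdV 1 φ p))))⁻¹ •
    crossProduct (pdV 0 φ p) (pdV 1 φ p)

/-- The second fundamental form `hᵢⱼ = n ⬝ ∂ᵢ∂ⱼφ`. -/
def sff (φ : Pt → Vec3) : Pt → Matrix (Fin 2) (Fin 2) ℝ :=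
  fun p => Matrix.of fun i j => unitNormal φ p ⬝ᵥ pdV i (pdV j φ) p

/-- Christoffel symbols `Γ^k_{ij}` of a metric `g`. -/
def christoffel (g : Pt → Matrix (Fin 2) (Fin 2) ℝ) (k i j : Fin 2) : Pt → ℝ :=
  fun p => (1/2) * ∑ l, (g p)⁻¹ k l *
    (pd i (fun q => g q j l) p + pd j (fun q => g q i l) p - pd l (fun q => g q i j) p)

/-- Covariant derivative `∇ᵢ h_{jk}` of a symmetric 2-tensor `h` with respect to `g`. -/
def covD (g h : Pt → Matrix (Fin 2) (Fin 2) ℝ) (i j k : Fin 2) : Pt → ℝ :=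
  fun p => pd i (fun q => h q j k) p
    - ∑ l, christoffel g l i j p * h p l k
    - ∑ l, christoffel g l i k p * h p j l

/-- Covariant Hessian `(∇²u)ᵢⱼ = ∂ᵢ∂ⱼu − Σₖ Γ^k_{ij} ∂ₖu`. -/
def hess (g : Pt → Matrix (Fin 2) (Fin 2) ℝ) (u : Pt → ℝ) (i j : Fin 2) : Pt → ℝ :=
  fun p => pd i (pd j u) p - ∑ k, christoffel g k i j p * pd k u p

/-- The curvature component `R₁₂₁₂` of a metric `g` (indices `1,2` rendered as `0,1`). -/
def R1212 (g : Pt → Matrix (Fin 2) (Fin 2) ℝ) : Pt → ℝ :=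
  fun p => ∑ m, g p 0 m *
    (pd 0 (christoffel g m 1 1) p - pd 1 (christoffel g m 1 0) p +
      ∑ l, (christoffel g m 0 l p * christoffel g l 1 1 p -
            christoffel g m 1 l p * christoffel g l 1 0 p))

/-- The Gauss curvature `K = R₁₂₁₂ / det g` of a metric `g`. -/
def gaussK (g : Pt → Matrix (Fin 2) (Fin 2) ℝ) : Pt → ℝ :=
  fun p => R1212 g p / (g p).det

/-- The squared norm `|du|²_g = Σᵢⱼ g^{ij} ∂ᵢu ∂ⱼu`. -/
def gradSq (g : Pt → Matrix (Fin 2) (Fin 2) ℝ) (u : Pt → ℝ) : Pt → ℝ :=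
  fun p => ∑ i, ∑ j, (g p)⁻¹ i j * pd i u p * pd j u p

/-- `g` is a smooth Riemannian metric on `U`: smooth entries, symmetric and
positive definite at each point of `U`. -/
def IsMetricOn (g : Pt → Matrix (Fin 2) (Fin 2) ℝ) (U : Set Pt) : Prop :=
  (∀ i j, ContDiffOn ℝ (⊤ : ℕ∞) (fun p => g p i j) U) ∧
  (∀ p ∈ U, (g p).IsSymm ∧ (g p).PosDef)

/-- `φ` is a smooth immersion on `U`. -/
def IsImmersionOn (φ : Pt → Vec3) (U : Set Pt) : Prop :=
  ContDiffOn ℝ (⊤ : ℕ∞) φ U ∧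
  ∀ p ∈ U, LinearIndependent ℝ ![pdV 0 φ p, pdV 1 φ p]

/-- The model metric `g₄ = cos⁴x dx² + sin²x dy²` on the strip `0 < x < π/2`. -/
def modelG : Pt → Matrix (Fin 2) (Fin 2) ℝ :=
  fun q => !![Real.cos (q 0) ^ 4, 0; 0, Real.sin (q 0) ^ 2]

/-- The candidate square root of the (absolute) Gauss curvature. -/
def modelk : Pt → ℝ :=
  fun q => 1 / Real.cos (q 0) ^ 2

lemma pd_eval {h : ℝ → ℝ} {h' : ℝ} {p : Pt} (hd : HasDerivAt h h' (p 0)) (i : Fin 2) :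
    pd i (fun q => h (q 0)) p = if i = 0 then h' else 0 := by
  have hproj : HasFDerivAt (fun q : Pt => q 0)
      (ContinuousLinearMap.proj (R := ℝ) (φ := fun _ : Fin 2 => ℝ) 0) p :=
    (ContinuousLinearMap.proj (R := ℝ) (φ := fun _ : Fin 2 => ℝ) 0).hasFDerivAt
  have H : HasFDerivAt (fun q : Pt => h (q 0))
      (h' • (ContinuousLinearMap.proj (R := ℝ) (φ := fun _ : Fin 2 => ℝ) 0)) p :=
    hd.comp_hasFDerivAt p hproj
  simp only [pd, H.fderiv]
  fin_cases i <;> simp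

lemma pd_congr {f g : Pt → ℝ} {p : Pt} (h : f =ᶠ[nhds p] g) (i : Fin 2) :
    pd i f p = pd i g p := by
  unfold pd; rw [h.fderiv_eq]

lemma pd_const (c : ℝ) (i : Fin 2) (p : Pt) : pd i (fun _ => c) p = 0 := by
  simp [pd]

lemma hda_congr {f : ℝ → ℝ} {a b t : ℝ} (h : HasDerivAt f a t) (e : a = b) :
    HasDerivAt f b t := e ▸ h


lemma entry00 : ∀ r : Pt, modelG r 0 0 = Real.cos (r 0) ^ 4 := fun r => by simp [modelG]
lemma entry01 : ∀ r : Pt, modelG r 0 1 = 0 := fun r => by simp [modelG]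
lemma entry10 : ∀ r : Pt, modelG r 1 0 = 0 := fun r => by simp [modelG]
lemma entry11 : ∀ r : Pt, modelG r 1 1 = Real.sin (r 0) ^ 2 := fun r => by simp [modelG]

lemma pd_g00 (i : Fin 2) (q : Pt) :
    pd i (fun r => modelG r 0 0) q =
      if i = 0 then -(4 * Real.cos (q 0) ^ 3 * Real.sin (q 0)) else 0 := by
  have hE : HasDerivAt (fun t => Real.cos t ^ 4)
      (-(4 * Real.cos (q 0) ^ 3 * Real.sin (q 0))) (q 0) :=
    hda_congr ((Real.hasDerivAt_cos (q 0)).pow 4) (by push_cast; ring)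
  rw [show (fun r : Pt => modelG r 0 0) = fun r => Real.cos (r 0) ^ 4 from funext entry00]
  exact pd_eval hE i

lemma pd_g01 (i : Fin 2) (q : Pt) : pd i (fun r => modelG r 0 1) q = 0 := by
  rw [show (fun r : Pt => modelG r 0 1) = fun _ => (0:ℝ) from funext entry01, pd_const]

lemma pd_g10 (i : Fin 2) (q : Pt) : pd i (fun r => modelG r 1 0) q = 0 := by
  rw [show (fun r : Pt => modelG r 1 0) = fun _ => (0:ℝ) from funext entry10, pd_const]

lemma pd_g11 (i : Fin 2) (q : Pt) :
    pd i (fun r => modelG r 1 1) q =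
      if i = 0 then 2 * Real.sin (q 0) * Real.cos (q 0) else 0 := by
  have hG : HasDerivAt (fun t => Real.sin t ^ 2)
      (2 * Real.sin (q 0) * Real.cos (q 0)) (q 0) :=
    hda_congr ((Real.hasDerivAt_sin (q 0)).pow 2) (by push_cast; ring)
  rw [show (fun r : Pt => modelG r 1 1) = fun r => Real.sin (r 0) ^ 2 from funext entry11]
  exact pd_eval hG i

lemma inv_modelG (q : Pt) (hc : Real.cos (q 0) ≠ 0) (hs : Real.sin (q 0) ≠ 0) :
    (modelG q)⁻¹ = !![(Real.cos (q 0) ^ 4)⁻¹, 0; 0, (Real.sin (q 0) ^ 2)⁻¹] := by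
  apply Matrix.inv_eq_right_inv
  have h4 : Real.cos (q 0) ^ 4 ≠ 0 := pow_ne_zero _ hc
  have h2 : Real.sin (q 0) ^ 2 ≠ 0 := pow_ne_zero _ hs
  ext i j
  fin_cases i <;> fin_cases j <;>
    simp [modelG, Matrix.mul_apply, Fin.sum_univ_two, Matrix.one_apply, h4, h2]

section
variable {q : Pt}

lemma c000 (hc : Real.cos (q 0) ≠ 0) (hs : Real.sin (q 0) ≠ 0) : christoffel modelG 0 0 0 q = -(2 * Real.sin (q 0) / Real.cos (q 0)) := by
  unfold christoffel
  rw [inv_modelG q hc hs]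
  simp [Fin.sum_univ_two, pd_g00, pd_g01, pd_g10, pd_g11]
  field_simp
  ring

lemma c001 (hc : Real.cos (q 0) ≠ 0) (hs : Real.sin (q 0) ≠ 0) : christoffel modelG 0 0 1 q = 0 := by
  unfold christoffel
  rw [inv_modelG q hc hs]
  simp [Fin.sum_univ_two, pd_g00, pd_g01, pd_g10, pd_g11]

lemma c010 (hc : Real.cos (q 0) ≠ 0) (hs : Real.sin (q 0) ≠ 0) : christoffel modelG 0 1 0 q = 0 := by
  unfold christoffel
  rw [inv_modelG q hc hs]
  simp [Fin.sum_univ_two, pd_g00, pd_g01, pd_g10, pd_g11]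

lemma c011 (hc : Real.cos (q 0) ≠ 0) (hs : Real.sin (q 0) ≠ 0) : christoffel modelG 0 1 1 q = -(Real.sin (q 0) / Real.cos (q 0) ^ 3) := by
  unfold christoffel
  rw [inv_modelG q hc hs]
  simp [Fin.sum_univ_two, pd_g00, pd_g01, pd_g10, pd_g11]
  field_simp

lemma c100 (hc : Real.cos (q 0) ≠ 0) (hs : Real.sin (q 0) ≠ 0) : christoffel modelG 1 0 0 q = 0 := by
  unfold christoffel
  rw [inv_modelG q hc hs]
  simp [Fin.sum_univ_two, pd_g00, pd_g01, pd_g10, pd_g11]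

lemma c101 (hc : Real.cos (q 0) ≠ 0) (hs : Real.sin (q 0) ≠ 0) : christoffel modelG 1 0 1 q = Real.cos (q 0) / Real.sin (q 0) := by
  unfold christoffel
  rw [inv_modelG q hc hs]
  simp [Fin.sum_univ_two, pd_g00, pd_g01, pd_g10, pd_g11]
  field_simp

lemma c110 (hc : Real.cos (q 0) ≠ 0) (hs : Real.sin (q 0) ≠ 0) : christoffel modelG 1 1 0 q = Real.cos (q 0) / Real.sin (q 0) := by
  unfold christoffel
  rw [inv_modelG q hc hs]
  simp [Fin.sum_univ_two, pd_g00, pd_g01, pd_g10, pd_g11]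
  field_simp

lemma c111 (hc : Real.cos (q 0) ≠ 0) (hs : Real.sin (q 0) ≠ 0) : christoffel modelG 1 1 1 q = 0 := by
  unfold christoffel
  rw [inv_modelG q hc hs]
  simp [Fin.sum_univ_two, pd_g00, pd_g01, pd_g10, pd_g11]

end

lemma hd_modelk {t : ℝ} (hc : Real.cos t ≠ 0) :
    HasDerivAt (fun u => 1 / Real.cos u ^ 2)
      (2 * Real.sin t / Real.cos t ^ 3) t := by
  have h2 : Real.cos t ^ 2 ≠ 0 := pow_ne_zero _ hc
  have := ((Real.hasDerivAt_cos t).pow 2).inv h2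
  simp only [one_div]
  refine hda_congr this ?_
  field_simp
  simp only [Pi.pow_apply]
  ring

lemma pd_k {q : Pt} (hc : Real.cos (q 0) ≠ 0) (i : Fin 2) :
    pd i modelk q = if i = 0 then 2 * Real.sin (q 0) / Real.cos (q 0) ^ 3 else 0 := by
  have : modelk = fun q : Pt => (fun u => 1 / Real.cos u ^ 2) (q 0) := rfl
  rw [this]
  exact pd_eval (hd_modelk hc) i

lemma hd_k1 {t : ℝ} (hc : Real.cos t ≠ 0) :
    HasDerivAt (fun u => 2 * Real.sin u / Real.cos u ^ 3)
      (2 / Real.cos t ^ 2 + 6 * Real.sin t ^ 2 / Real.cos t ^ 4) t := by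
  have h3 : Real.cos t ^ 3 ≠ 0 := pow_ne_zero _ hc
  have := ((Real.hasDerivAt_sin t).const_mul 2).div ((Real.hasDerivAt_cos t).pow 3) h3
  refine hda_congr this ?_
  field_simp
  simp only [Pi.pow_apply]
  ring

lemma hd_g011 {t : ℝ} (hc : Real.cos t ≠ 0) :
    HasDerivAt (fun u => -(Real.sin u / Real.cos u ^ 3))
      (-(1 / Real.cos t ^ 2) - 3 * Real.sin t ^ 2 / Real.cos t ^ 4) t := by
  have h3 : Real.cos t ^ 3 ≠ 0 := pow_ne_zero _ hc
  have := ((Real.hasDerivAt_sin t).div ((Real.hasDerivAt_cos t).pow 3) h3).neg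
  refine hda_congr this ?_
  field_simp
  simp only [Pi.pow_apply]
  ring

/-- On the strip `0 < x < π/2`, the metric `g₄ = cos⁴x dx² + sin²x dy²` has Gauss curvature
`K = −1/cos⁴x < 0` and `k = √(−K) = 1/cos²x` satisfies the Darboux-integrability tensor equation
`(∇²k)ᵢⱼ = (5/(2k)) ∂ᵢk ∂ⱼk + 2k³ gᵢⱼ`. -/
theorem model_metric_check_16 :
    ∀ p : Pt, 0 < p 0 ∧ p 0 < Real.pi / 2 →
      gaussK modelG p = -(1 / Real.cos (p 0) ^ 4) ∧
      gaussK modelG p < 0 ∧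
      modelk p = Real.sqrt (- (gaussK modelG p)) ∧
      (∀ i j : Fin 2,
        hess modelG modelk i j p =
          (5 / (2 * modelk p)) * pd i modelk p * pd j modelk p
            + 2 * modelk p ^ 3 * modelG p i j) := by
  rintro p ⟨hp0, hp1⟩
  have hpi := Real.pi_pos
  have hc : 0 < Real.cos (p 0) := Real.cos_pos_of_mem_Ioo ⟨by linarith, hp1⟩
  have hs : 0 < Real.sin (p 0) := Real.sin_pos_of_pos_of_lt_pi hp0 (by linarith)
  have hc' := hc.ne'
  have hs' := hs.ne'
  -- the open strip
  set V : Set Pt := (fun q : Pt => q 0) ⁻¹' Set.Ioo 0 (Real.pi / 2) with hVdef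
  have hV : IsOpen V := isOpen_Ioo.preimage (continuous_apply 0)
  have hpV : p ∈ V := ⟨hp0, hp1⟩
  have hmem : V ∈ nhds p := hV.mem_nhds hpV
  have hcq : ∀ q ∈ V, Real.cos (q 0) ≠ 0 := fun q hq =>
    (Real.cos_pos_of_mem_Ioo ⟨by linarith [hq.1, hq.2], hq.2⟩).ne'
  have hsq : ∀ q ∈ V, Real.sin (q 0) ≠ 0 := fun q hq =>
    (Real.sin_pos_of_pos_of_lt_pi hq.1 (by linarith [hq.2])).ne'
  -- derivatives of christoffel symbols
  have hev011 : christoffel modelG 0 1 1 =ᶠ[nhds p]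
      fun q => -(Real.sin (q 0) / Real.cos (q 0) ^ 3) :=
    Filter.eventuallyEq_of_mem hmem (fun q hq => c011 (hcq q hq) (hsq q hq))
  have hpd011 : pd 0 (christoffel modelG 0 1 1) p =
      -(1 / Real.cos (p 0) ^ 2) - 3 * Real.sin (p 0) ^ 2 / Real.cos (p 0) ^ 4 := by
    rw [pd_congr hev011 0,
      show (fun q : Pt => -(Real.sin (q 0) / Real.cos (q 0) ^ 3))
        = fun q : Pt => (fun u => -(Real.sin u / Real.cos u ^ 3)) (q 0) from rfl,
      pd_eval (hd_g011 hc') 0]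
    simp
  have hev010 : christoffel modelG 0 1 0 =ᶠ[nhds p] fun _ => (0:ℝ) :=
    Filter.eventuallyEq_of_mem hmem (fun q hq => c010 (hcq q hq) (hsq q hq))
  have hpd010 : pd 1 (christoffel modelG 0 1 0) p = 0 := by
    rw [pd_congr hev010 1, pd_const]
  -- derivatives of modelk
  have hevk0 : pd 0 modelk =ᶠ[nhds p]
      fun q => 2 * Real.sin (q 0) / Real.cos (q 0) ^ 3 :=
    Filter.eventuallyEq_of_mem hmem (fun q hq => by
      simpa using pd_k (hcq q hq) 0)
  have hevk1 : pd 1 modelk =ᶠ[nhds p] fun _ => (0:ℝ) :=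
    Filter.eventuallyEq_of_mem hmem (fun q hq => by
      simpa using pd_k (hcq q hq) 1)
  have hk00 : pd 0 (pd 0 modelk) p =
      2 / Real.cos (p 0) ^ 2 + 6 * Real.sin (p 0) ^ 2 / Real.cos (p 0) ^ 4 := by
    rw [pd_congr hevk0 0,
      show (fun q : Pt => 2 * Real.sin (q 0) / Real.cos (q 0) ^ 3)
        = fun q : Pt => (fun u => 2 * Real.sin u / Real.cos u ^ 3) (q 0) from rfl,
      pd_eval (hd_k1 hc') 0]
    simp
  have hk10 : pd 1 (pd 0 modelk) p = 0 := by
    rw [pd_congr hevk0 1,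
      show (fun q : Pt => 2 * Real.sin (q 0) / Real.cos (q 0) ^ 3)
        = fun q : Pt => (fun u => 2 * Real.sin u / Real.cos u ^ 3) (q 0) from rfl,
      pd_eval (hd_k1 hc') 1]
    simp
  have hk01 : pd 0 (pd 1 modelk) p = 0 := by rw [pd_congr hevk1 0, pd_const]
  have hk11 : pd 1 (pd 1 modelk) p = 0 := by rw [pd_congr hevk1 1, pd_const]
  have hkp0 : pd 0 modelk p = 2 * Real.sin (p 0) / Real.cos (p 0) ^ 3 := by
    simpa using pd_k hc' 0
  have hkp1 : pd 1 modelk p = 0 := by simpa using pd_k hc' 1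
  -- the determinant
  have hdet : (modelG p).det = Real.cos (p 0) ^ 4 * Real.sin (p 0) ^ 2 := by
    simp [modelG, Matrix.det_fin_two_of]
  have hdet' : (modelG p).det ≠ 0 := by
    rw [hdet]; positivity
  -- Gauss curvature
  have hK : gaussK modelG p = -(1 / Real.cos (p 0) ^ 4) := by
    unfold gaussK R1212
    rw [Fin.sum_univ_two, entry01, Fin.sum_univ_two, Fin.sum_univ_two, entry00,
      hpd011, hpd010, c000 hc' hs', c001 hc' hs', c010 hc' hs', c011 hc' hs',
      c100 hc' hs', c101 hc' hs', c110 hc' hs', c111 hc' hs', hdet]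
    field_simp
    ring
  refine ⟨hK, ?_, ?_, ?_⟩
  · rw [hK]
    have : 0 < 1 / Real.cos (p 0) ^ 4 := by positivity
    linarith
  · rw [hK, neg_neg,
      show (1:ℝ) / Real.cos (p 0) ^ 4 = (1 / Real.cos (p 0) ^ 2) ^ 2 by ring,
      Real.sqrt_sq (by positivity)]
    rfl
  · have hmk : modelk p = 1 / Real.cos (p 0) ^ 2 := rfl
    have H : ∀ a b : Fin 2, hess modelG modelk a b p =
        (5 / (2 * modelk p)) * pd a modelk p * pd b modelk p
          + 2 * modelk p ^ 3 * modelG p a b := by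
      have key : ∀ a b : Fin 2, a = 0 ∨ a = 1 → b = 0 ∨ b = 1 → hess modelG modelk a b p =
          (5 / (2 * modelk p)) * pd a modelk p * pd b modelk p
            + 2 * modelk p ^ 3 * modelG p a b := by
        rintro a b (rfl | rfl) (rfl | rfl) <;>
          unfold hess <;>
          rw [Fin.sum_univ_two] <;>
          simp only [hmk, hkp0, hkp1, hk00, hk01, hk10, hk11,
            c000 hc' hs', c001 hc' hs', c010 hc' hs', c011 hc' hs',
            c100 hc' hs', c101 hc' hs', c110 hc' hs', c111 hc' hs',
            entry00, entry01, entry10, entry11] <;>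
          field_simp <;>
          ring
      intro a b
      exact key a b (by omega) (by omega)
    exact H
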